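/- Let F be a Fort space with particular point b and 𝔥 : F → F continuous. The following are equivalent: (a) (F, 𝔥) has the uniform stroboscopical property; (b) (F, 𝔥) has the stroboscopical property; (c) every point of F is a periodic point of 𝔥. -/

import Mathlib

open Filter

/-- The Fort topology on a set `F` with particular point `b`:
`U` is open iff `b ∉ U` or `F \ U` is finite. -/
def fortTopology {F : Type*} (b : F) : TopologicalSpace F where
  IsOpen U := b ∉ U ∨ (Uᶜ : Set F).Finite
  isOpen_univ := Or.inr (by simp)
  isOpen_inter := by
    rintro U V (hU | hU) hV
    · exact Or.inl fun h => hU h.1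
    · rcases hV with hV | hV
      · exact Or.inl fun h => hV h.2
      · exact Or.inr (by rw [Set.compl_inter]; exact hU.union hV)
  isOpen_sUnion := by
    intro S hS
    by_cases hb : b ∈ ⋃₀ S
    · obtain ⟨U, hU, hbU⟩ := hb
      rcases hS U hU with h | h
      · exact absurd hbU h
      · exact Or.inr (h.subset (Set.compl_subset_compl.mpr (Set.subset_sUnion_of_mem hU)))
    · exact Or.inl hb

/-- The basic entourage `γ_H = ((F \ H) × (F \ H)) ∪ Δ_H` for `H ⊆ F`. -/
def fortEnt {F : Type*} (H : Set F) : Set (F × F) :=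
  (Hᶜ ×ˢ Hᶜ) ∪ {p : F × F | p.1 = p.2 ∧ p.1 ∈ H}

/-- Membership in the unique compatible uniform structure `𝒦` on the Fort space `F`
with particular point `b`: `D` contains some `γ_H` with `H ⊆ F \ {b}` finite. -/
def IsFortEntourage {F : Type*} (b : F) (D : Set (F × F)) : Prop :=
  ∃ H : Set F, H.Finite ∧ b ∉ H ∧ fortEnt H ⊆ D

/-- `ω_f(A, x)` with respect to a given topology: limits of convergent subsequences
of `(f^[A i] x)_i`. -/
def omegaLimitSet {Z : Type*} (t : TopologicalSpace Z) (f : Z → Z) (A : ℕ → ℕ) (x : Z) :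
    Set Z :=
  {y | ∃ k : ℕ → ℕ, StrictMono k ∧ Tendsto (fun i => f^[A (k i)] x) atTop (@nhds Z t y)}

/-- Stroboscopical property of `(F, 𝔥)` on the Fort space with particular point `b`. -/
def FortStrob {F : Type*} (b : F) (h : F → F) : Prop :=
  ∀ z : F, ∀ A : ℕ → ℕ, StrictMono A →
    ∃ x : F, z ∈ omegaLimitSet (fortTopology b) h A x

/-- Strongly stroboscopical property of `(F, 𝔥)`. -/
def FortStrongStrob {F : Type*} (b : F) (h : F → F) : Prop :=
  ∀ z : F, ∀ A : ℕ → ℕ, StrictMono A →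
    @Dense F (fortTopology b) {x : F | z ∈ omegaLimitSet (fortTopology b) h A x}

/-- Uniform stroboscopical property of `(F, 𝔥)` with respect to the uniform
structure `𝒦` of the Fort space. -/
def FortUnifStrob {F : Type*} (b : F) (h : F → F) : Prop :=
  ∀ A : ℕ → ℕ, StrictMono A → ∃ k : ℕ → ℕ, StrictMono k ∧
    ∃ ρ : F → F, ∀ D : Set (F × F), IsFortEntourage b D →
      ∃ N : ℕ, ∀ i, N ≤ i → ∀ z : F, (z, h^[A (k i)] (ρ z)) ∈ D

namespace FortAux

variable {F : Type*}

lemma iter_mod (f : F → F) (z : F) (p : ℕ) (hp : f^[p] z = z) (n : ℕ) :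
    f^[n] z = f^[n % p] z := by
  conv_lhs => rw [← Nat.mod_add_div n p]
  rw [Function.iterate_add_apply, Function.iterate_mul, Function.iterate_fixed hp]

lemma modstab (A : ℕ → ℕ) :
    ∃ k : ℕ → ℕ, StrictMono k ∧ ∀ m : ℕ, 0 < m → ∃ r, ∀ᶠ i in atTop, A (k i) % m = r := by
  have pigeon : ∀ (M : ℕ), 0 < M → ∀ s : Set ℕ, s.Infinite →
      ∃ t, t ⊆ s ∧ t.Infinite ∧ ∃ c, ∀ n ∈ t, A n % M = c := by
    intro M hM s hs
    haveI := hs.to_subtype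
    obtain ⟨y, hy⟩ := Finite.exists_infinite_fiber
      (fun n : s => (⟨A n % M, Nat.mod_lt _ hM⟩ : Fin M))
    refine ⟨Subtype.val '' ((fun n : s => (⟨A n % M, Nat.mod_lt _ hM⟩ : Fin M)) ⁻¹' {y}),
      ?_, ?_, y.1, ?_⟩
    · rintro n ⟨m, _, rfl⟩; exact m.2
    · exact (Set.infinite_coe_iff.mp hy).image
        (Set.injOn_of_injective Subtype.val_injective)
    · rintro n ⟨m, hm, rfl⟩
      exact congrArg Fin.val (hm : _ = y)
  have pigeon' : ∀ (L : ℕ) (s : Set ℕ), s.Infinite →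
      ∃ t, t ⊆ s ∧ t.Infinite ∧ ∃ c, ∀ n ∈ t, A n % (Nat.factorial L) = c :=
    fun L => pigeon _ (Nat.factorial_pos L)
  choose T hTsub hTinf c hc using pigeon'
  let G : ℕ → {s : Set ℕ // s.Infinite} := fun L =>
    Nat.rec ⟨Set.univ, Set.infinite_univ⟩
      (fun L p => ⟨T (L + 1) p.1 p.2, hTinf _ _ _⟩) L
  have hG1 : ∀ L, (G (L + 1)).1 ⊆ (G L).1 := fun L => hTsub _ _ _
  have hGres : ∀ L, ∀ n ∈ (G (L + 1)).1, A n % Nat.factorial (L + 1) = c (L + 1) (G L).1 (G L).2 :=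
    fun L => hc _ _ _
  have hGmono : ∀ i j : ℕ, i ≤ j → (G j).1 ⊆ (G i).1 := by
    intro i j hij
    induction j, hij using Nat.le_induction with
    | base => exact Set.Subset.refl _
    | succ j hij ih => exact (hG1 j).trans ih
  -- build k
  let k : ℕ → ℕ := fun i =>
    Nat.rec (Classical.choose ((G 0).2.exists_gt 0))
      (fun i prev => Classical.choose ((G (i + 1)).2.exists_gt prev)) i
  have hkmem : ∀ i, k i ∈ (G i).1 := by
    intro i
    cases i with
    | zero => exact (Classical.choose_spec ((G 0).2.exists_gt 0)).1
    | succ i => exact (Classical.choose_spec ((G (i + 1)).2.exists_gt (k i))).1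
  have hklt : ∀ i, k i < k (i + 1) :=
    fun i => (Classical.choose_spec ((G (i + 1)).2.exists_gt (k i))).2
  have hkmono : StrictMono k := strictMono_nat_of_lt_succ hklt
  have hres : ∀ m, 0 < m → ∀ n ∈ (G m).1, ∀ n' ∈ (G m).1,
      A n % Nat.factorial m = A n' % Nat.factorial m := by
    intro m hm n hn n' hn'
    obtain ⟨L, rfl⟩ : ∃ L, m = L + 1 := ⟨m - 1, by omega⟩
    rw [hGres L n hn, hGres L n' hn']
  refine ⟨k, hkmono, fun m hm => ⟨A (k m) % m, ?_⟩⟩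
  rw [eventually_atTop]
  refine ⟨m, fun i hi => ?_⟩
  have h1 : k i ∈ (G m).1 := hGmono m i hi (hkmem i)
  have h2 := hres m hm (k i) h1 (k m) (hkmem m)
  calc A (k i) % m = A (k i) % Nat.factorial m % m :=
        (Nat.mod_mod_of_dvd _ (Nat.dvd_factorial hm le_rfl)).symm
    _ = A (k m) % Nat.factorial m % m := by rw [h2]
    _ = A (k m) % m := Nat.mod_mod_of_dvd _ (Nat.dvd_factorial hm le_rfl)

lemma fort_isOpen {b : F} {U : Set F} (h : b ∉ U ∨ (Uᶜ : Set F).Finite) :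
    @IsOpen F (fortTopology b) U := h

lemma fort_isOpen_iff {b : F} {U : Set F} (h : @IsOpen F (fortTopology b) U) :
    b ∉ U ∨ (Uᶜ : Set F).Finite := h

lemma tendsto_fort_ne (b z : F) (hz : z ≠ b) (u : ℕ → F)
    (hu : Tendsto u atTop (@nhds F (fortTopology b) z)) : ∀ᶠ i in atTop, u i = z := by
  have hopen : @IsOpen F (fortTopology b) {z} :=
    fort_isOpen (Or.inl fun h => hz (Set.mem_singleton_iff.mp h).symm)
  have hmem : {z} ∈ @nhds F (fortTopology b) z :=
    @IsOpen.mem_nhds F (fortTopology b) z {z} hopen rfl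
  have : ∀ᶠ i in atTop, u i ∈ ({z} : Set F) := hu hmem
  filter_upwards [this] with i hi using hi

lemma not_tendsto_fort_b (b : F) (S : Set F) (hS : S.Finite) (hbS : b ∉ S)
    (u : ℕ → F) (hu : ∀ i, u i ∈ S) :
    ¬ Tendsto u atTop (@nhds F (fortTopology b) b) := by
  intro h
  have hopen : @IsOpen F (fortTopology b) Sᶜ :=
    fort_isOpen (Or.inr (by rw [compl_compl]; exact hS))
  have hmem : Sᶜ ∈ @nhds F (fortTopology b) b :=
    @IsOpen.mem_nhds F (fortTopology b) b Sᶜ hopen hbS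
  have hev : ∀ᶠ i in atTop, u i ∈ (Sᶜ : Set F) := h hmem
  obtain ⟨i, hi⟩ := hev.exists
  exact hi (hu i)

lemma iter_inj (𝔥 : F → F) (hper : ∀ x : F, ∃ m, 1 ≤ m ∧ 𝔥^[m] x = x) :
    Function.Injective 𝔥 := by
  intro a a' h
  obtain ⟨m, hm1, hm2⟩ := hper a
  obtain ⟨n, hn1, hn2⟩ := hper a'
  have ha : 𝔥^[m * n] a = a := by
    rw [Function.iterate_mul]; exact Function.iterate_fixed hm2 n
  have ha' : 𝔥^[m * n] a' = a' := by
    rw [mul_comm, Function.iterate_mul]; exact Function.iterate_fixed hn2 m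
  have hpos : 0 < m * n := Nat.mul_pos hm1 hn1
  have e : ∀ y : F, 𝔥^[m * n] y = 𝔥^[m * n - 1] (𝔥 y) := by
    intro y
    conv_lhs => rw [show m * n = (m * n - 1) + 1 by omega]
    exact Function.iterate_succ_apply 𝔥 _ y
  rw [← ha, e, h, ← e, ha']

lemma c_to_a (b : F) (𝔥 : F → F) (hper : ∀ x : F, ∃ m, 1 ≤ m ∧ 𝔥^[m] x = x) :
    FortUnifStrob b 𝔥 := by
  intro A hA
  obtain ⟨k, hk, hkres⟩ := modstab A
  choose p hp1 hp2 using hper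
  choose r hr using fun z => hkres (p z) (hp1 z)
  set ρ : F → F := fun z => 𝔥^[(p z - r z) % p z] z with hρdef
  have hE : ∀ z : F, ∀ᶠ i in atTop, 𝔥^[A (k i)] (ρ z) = z := by
    intro z
    filter_upwards [hr z] with i hi
    have hrlt : r z < p z := hi ▸ Nat.mod_lt _ (hp1 z)
    show 𝔥^[A (k i)] (𝔥^[(p z - r z) % p z] z) = z
    rw [← Function.iterate_add_apply, iter_mod 𝔥 z (p z) (hp2 z)]
    have hz0 : (A (k i) + (p z - r z) % p z) % p z = 0 := by
      rcases Nat.eq_zero_or_pos (r z) with h0 | h0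
      · rw [h0, Nat.sub_zero, Nat.mod_self, Nat.add_zero, hi, h0]
      · have hs : (p z - r z) % p z = p z - r z := Nat.mod_eq_of_lt (by omega)
        have hd := Nat.div_add_mod (A (k i)) (p z)
        rw [hi] at hd
        have : A (k i) + (p z - r z) % p z = p z * (A (k i) / p z + 1) := by
          rw [hs, Nat.mul_succ]; omega
        rw [this, Nat.mul_mod_right]
    rw [hz0]
    rfl
  have hinj : Function.Injective 𝔥 :=
    iter_inj 𝔥 (fun x => ⟨p x, hp1 x, hp2 x⟩)
  have hρinj : Function.Injective ρ := by
    intro z w hzw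
    obtain ⟨i, hz, hw⟩ := ((hE z).and (hE w)).exists
    rw [← hz, hzw, hw]
  refine ⟨k, hk, ρ, ?_⟩
  rintro D ⟨H, hHfin, hbH, hHD⟩
  have hall : ∀ᶠ i in atTop, ∀ w ∈ H, 𝔥^[A (k i)] (ρ w) = w :=
    (eventually_all_finite hHfin).mpr fun w _ => hE w
  obtain ⟨N, hN⟩ := eventually_atTop.mp hall
  refine ⟨N, fun i hi z => hHD ?_⟩
  by_cases hzH : z ∈ H
  · exact Or.inr ⟨(hN i hi z hzH).symm, hzH⟩
  · refine Or.inl ⟨hzH, fun hmem => ?_⟩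
    have h1 := hN i hi _ hmem
    have h2 : ρ (𝔥^[A (k i)] (ρ z)) = ρ z := (hinj.iterate (A (k i))) h1
    have h3 := hρinj h2
    exact hzH (h3 ▸ hmem)

lemma a_to_b (b : F) (𝔥 : F → F) (h : FortUnifStrob b 𝔥) : FortStrob b 𝔥 := by
  intro z A hA
  obtain ⟨k, hk, ρ, hρ⟩ := h A hA
  refine ⟨ρ z, k, hk, ?_⟩
  by_cases hz : z = b
  · rw [hz]
    rw [Filter.tendsto_def]
    intro U hU
    rw [@mem_nhds_iff F (fortTopology b) b U] at hU
    obtain ⟨V, hVU, hVopen, hbV⟩ := hU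
    have hVc : (Vᶜ : Set F).Finite := by
      rcases fort_isOpen_iff hVopen with h1 | h1
      · exact absurd hbV h1
      · exact h1
    obtain ⟨N, hN⟩ := hρ (fortEnt (Vᶜ)) ⟨Vᶜ, hVc, fun hc => hc hbV, Set.Subset.refl _⟩
    have hev : ∀ᶠ i in atTop, 𝔥^[A (k i)] (ρ b) ∈ U := by
      rw [eventually_atTop]
      refine ⟨N, fun i hi => ?_⟩
      rcases hN i hi b with h1 | h2
      · exact hVU (not_not.mp h1.2)
      · exact absurd h2.2 fun hc => hc hbV
    exact hev
  · obtain ⟨N, hN⟩ := hρ (fortEnt {z})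
      ⟨{z}, Set.finite_singleton z, fun hb => hz (Set.mem_singleton_iff.mp hb).symm,
        Set.Subset.refl _⟩
    have hev : ∀ᶠ i in atTop, 𝔥^[A (k i)] (ρ z) = z := by
      rw [eventually_atTop]
      refine ⟨N, fun i hi => ?_⟩
      rcases hN i hi z with h1 | h2
      · exact absurd rfl h1.1
      · exact h2.1.symm
    have heq : (fun i => 𝔥^[A (k i)] (ρ z)) =ᶠ[atTop] fun _ => z := hev
    exact Filter.Tendsto.congr' heq.symm (@tendsto_const_nhds F (fortTopology b) ℕ z atTop)

lemma b_to_c (b : F) (𝔥 : F → F) (h : FortStrob b 𝔥) :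
    ∀ x : F, ∃ m : ℕ, 1 ≤ m ∧ 𝔥^[m] x = x := by
  have hA : StrictMono (fun n : ℕ => n + 1) := fun _ _ hab => Nat.succ_lt_succ hab
  have step1 : ∀ z : F, z ≠ b → ∃ m, 1 ≤ m ∧ 𝔥^[m] z = z := by
    intro z hz
    obtain ⟨x, k, hk, htend⟩ := h z (fun n => n + 1) hA
    have hev := tendsto_fort_ne b z hz _ htend
    obtain ⟨N, hN⟩ := eventually_atTop.mp hev
    have h1 : 𝔥^[k N + 1] x = z := hN N le_rfl
    have h2 : 𝔥^[k (N + 1) + 1] x = z := hN (N + 1) (Nat.le_succ N)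
    have hlt : k N + 1 < k (N + 1) + 1 := by
      have := hk (show N < N + 1 by omega); omega
    refine ⟨(k (N + 1) + 1) - (k N + 1), by omega, ?_⟩
    rw [← h1, ← Function.iterate_add_apply,
      show (k (N + 1) + 1) - (k N + 1) + (k N + 1) = k (N + 1) + 1 by omega]
    exact h2.trans h1.symm
  intro x
  by_cases hx : x = b
  · rw [hx]
    by_contra hb
    push_neg at hb
    obtain ⟨x, k, hk, htend⟩ := h b (fun n => n + 1) hA
    have key : ∀ (y : F) (q : ℕ), 1 ≤ q → 𝔥^[q] y = y →
        (∀ i : ℕ, ∃ n, 𝔥^[k i + 1] x = 𝔥^[n] y) → False := by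
      intro y q hq hqy horb
      set S : Set F := (fun j => 𝔥^[j] y) '' (Set.Iio q) with hS
      have hSfin : S.Finite := (Set.finite_Iio q).image _
      have hbS : b ∉ S := by
        rintro ⟨j, hj, hjb⟩
        refine hb q hq ?_
        rw [← hjb, ← Function.iterate_add_apply, Nat.add_comm q j,
          Function.iterate_add_apply, hqy]
      refine not_tendsto_fort_b b S hSfin hbS _ ?_ htend
      intro i
      obtain ⟨n, hn⟩ := horb i
      rw [hn, iter_mod 𝔥 y q hqy n]
      exact ⟨n % q, Nat.mod_lt _ hq, rfl⟩
    by_cases hxb : x = b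
    · have hc : 𝔥 b ≠ b := fun hc => hb 1 le_rfl (by simpa using hc)
      obtain ⟨q, hq, hqy⟩ := step1 (𝔥 b) hc
      refine key (𝔥 b) q hq hqy (fun i => ⟨k i, ?_⟩)
      rw [hxb]
      exact Function.iterate_succ_apply 𝔥 (k i) b
    · obtain ⟨q, hq, hqy⟩ := step1 x hxb
      exact key x q hq hqy (fun i => ⟨k i + 1, rfl⟩)
  · exact step1 x hx

end FortAux

/-- for continuous `𝔥` on the Fort space `F`, the uniform
stroboscopical property, the stroboscopical property, and "every point of `F` is
periodic for `𝔥`" are equivalent. -/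
theorem stmt_18 {F : Type*} (b : F) (𝔥 : F → F)
    (hcont : @Continuous F F (fortTopology b) (fortTopology b) 𝔥) :
    (FortUnifStrob b 𝔥 ↔ FortStrob b 𝔥) ∧
    (FortStrob b 𝔥 ↔ ∀ x : F, ∃ m : ℕ, 1 ≤ m ∧ 𝔥^[m] x = x) :=
  ⟨⟨FortAux.a_to_b b 𝔥, fun hb => FortAux.c_to_a b 𝔥 (FortAux.b_to_c b 𝔥 hb)⟩,
   ⟨FortAux.b_to_c b 𝔥, fun hc => FortAux.a_to_b b 𝔥 (FortAux.c_to_a b 𝔥 hc)⟩⟩
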